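/- Let m > 1 be an odd integer divisible by 3, let E_m be the elliptic curve over ℚ defined by y² = x³ - x + m⁶, and let P = (0, m³), Q = (-1, m³), and R = (-m², m) be rational points on E_m. Then none of the points R, Q + R, and P + Q + R lies in 2E_m(ℚ); i.e., each is nontrivial in E_m(ℚ)/2E_m(ℚ). -/

import Mathlib

/-- The elliptic curve `E_m : y² = x³ - x + m⁶` over `ℚ`. -/
def Em (m : ℤ) : WeierstrassCurve ℚ := ⟨0, 0, 0, -1, (m : ℚ) ^ 6⟩

/-- The doubling map `P ↦ 2 • P` as an additive group homomorphism; its range is the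
subgroup `2A` of `A`. -/
def doublingHom (A : Type*) [AddCommGroup A] : A →+ A :=
  AddMonoidHom.mk' (fun a => 2 • a) (fun a b => smul_add 2 a b)

open WeierstrassCurve.Affine WeierstrassCurve.Affine.Point

/-- The `x`-coordinate of an affine point (`0` for the point at infinity). -/
def EmPtX {R : Type*} [CommRing R] {W : WeierstrassCurve.Affine R} : W.Point → R
  | .zero => 0
  | @WeierstrassCurve.Affine.Point.some _ _ _ x _ _ => x

lemma Em_zmod3 : ∀ a n d : ZMod 3,
    n^4 - 4*a*n^3*d + 2*n^2*d^2 + 4*a*n*d^3 + d^4 = 0 → n = 0 ∧ d = 0 := by decide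

/-- The descent quartic has no rational root when `3 ∣ m`. -/
lemma Em_quartic_ne (m c : ℤ) (h3 : (3:ℤ) ∣ m) (x : ℚ) :
    x^4 - 4*(c:ℚ)*x^3 + 2*x^2 + (4*(c:ℚ) - 8*(m:ℚ)^6)*x + (1 - 4*(c:ℚ)*(m:ℚ)^6) ≠ 0 := by
  intro hq
  set n : ℤ := x.num with hn
  set d : ℤ := (x.den : ℤ) with hd
  have hd0 : (d:ℚ) ≠ 0 := by rw [hd]; exact_mod_cast x.den_nz
  have hx : x = (n:ℚ) / (d:ℚ) := by rw [hn, hd]; push_cast; exact (Rat.num_div_den x).symm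
  have hint : (n^4 - 4*c*n^3*d + 2*n^2*d^2 + (4*c - 8*m^6)*n*d^3 + (1-4*c*m^6)*d^4 : ℤ) = 0 := by
    have hQ : ((n:ℚ)^4 - 4*c*(n:ℚ)^3*d + 2*(n:ℚ)^2*(d:ℚ)^2
        + (4*(c:ℚ) - 8*(m:ℚ)^6)*(n:ℚ)*(d:ℚ)^3 + (1-4*(c:ℚ)*(m:ℚ)^6)*(d:ℚ)^4) = 0 := by
      rw [hx] at hq
      field_simp at hq
      have h6 : ((n:ℚ)^4 - 4*c*(n:ℚ)^3*d + 2*(n:ℚ)^2*(d:ℚ)^2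
          + (4*(c:ℚ) - 8*(m:ℚ)^6)*(n:ℚ)*(d:ℚ)^3 + (1-4*(c:ℚ)*(m:ℚ)^6)*(d:ℚ)^4) * (d:ℚ)^6 = 0 := by
        linear_combination (d:ℚ)^6 * hq
      exact (mul_eq_zero.mp h6).resolve_right (pow_ne_zero _ hd0)
    exact_mod_cast hQ
  have h9 := congrArg (Int.cast : ℤ → ZMod 3) hint
  push_cast at h9
  have hm0 : ((m : ZMod 3)) = 0 := by
    exact_mod_cast (ZMod.intCast_zmod_eq_zero_iff_dvd m 3).mpr h3
  rw [hm0] at h9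
  have h9' : (n : ZMod 3)^4 - 4*(c:ZMod 3)*(n:ZMod 3)^3*(d:ZMod 3) + 2*(n:ZMod 3)^2*(d:ZMod 3)^2
      + 4*(c:ZMod 3)*(n:ZMod 3)*(d:ZMod 3)^3 + (d:ZMod 3)^4 = 0 := by
    linear_combination h9
  obtain ⟨hn0, hd0'⟩ := Em_zmod3 _ _ _ h9'
  have h3n : (3:ℤ) ∣ n := (ZMod.intCast_zmod_eq_zero_iff_dvd n 3).mp hn0
  have h3d : (3:ℤ) ∣ d := (ZMod.intCast_zmod_eq_zero_iff_dvd d 3).mp hd0'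
  have h3n' : (3:ℕ) ∣ n.natAbs := Int.natAbs_dvd_natAbs.mpr h3n
  have h3d' : (3:ℕ) ∣ x.den := by rw [hd] at h3d; exact_mod_cast h3d
  have := Nat.dvd_gcd h3n' h3d'
  rw [Nat.Coprime.gcd_eq_one x.reduced] at this
  omega

/-- A point on `E_m` whose `x`-coordinate is an integer is not twice a rational point. -/
lemma Em_descent (m c : ℤ) (h3 : (3:ℤ) ∣ m) {a b : ℚ} (hc : a = (c : ℚ))
    (hS : (Em m).toAffine.Nonsingular a b) :
    WeierstrassCurve.Affine.Point.some _ _ hS ∉ (doublingHom (Em m).toAffine.Point).range := by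
  rintro ⟨T, hT⟩
  have hT' : T + T = WeierstrassCurve.Affine.Point.some _ _ hS := by
    simpa [doublingHom, two_smul] using hT
  cases T with
  | zero =>
    rw [← zero_def, zero_add] at hT'
    exact (some_ne_zero hS) hT'.symm
  | @some x y h =>
    by_cases hy : y = (Em m).toAffine.negY x y
    · rw [add_self_of_Y_eq hy] at hT'
      exact (some_ne_zero hS) hT'.symm
    · rw [add_self_of_Y_ne hy] at hT'
      have hx := congrArg EmPtX hT'
      simp only [EmPtX] at hx
      have hy0 : y ≠ 0 := by
        intro h0
        apply hy
        simp [WeierstrassCurve.Affine.negY, Em, h0, WeierstrassCurve.toAffine]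
      have heq : y^2 = x^3 - x + (m:ℚ)^6 := by
        have := h.left
        rw [WeierstrassCurve.Affine.equation_iff] at this
        simp only [Em, WeierstrassCurve.toAffine] at this
        linear_combination this
      rw [hc] at hx
      have hslope : (Em m).toAffine.slope x x y y = (3*x^2 - 1)/(2*y) := by
        rw [slope_of_Y_ne rfl hy]
        simp [Em, WeierstrassCurve.toAffine, WeierstrassCurve.Affine.negY]
        ring_nf
      rw [hslope] at hx
      simp only [WeierstrassCurve.Affine.addX] at hx
      have hEm : (Em m).toAffine.a₁ = 0 ∧ (Em m).toAffine.a₂ = 0 := ⟨rfl, rfl⟩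
      rw [hEm.1, hEm.2] at hx
      apply Em_quartic_ne m c h3 x
      have h2y : (2*y) ≠ 0 := by simpa using hy0
      field_simp at hx
      linear_combination hx + (4*(c:ℚ) + 8*x)*heq

lemma Em_some_congr {W : WeierstrassCurve.Affine ℚ} {x₁ y₁ x₂ y₂ : ℚ} (hx : x₁ = x₂)
    (hy : y₁ = y₂) (h₁ : W.Nonsingular x₁ y₁) (h₂ : W.Nonsingular x₂ y₂) :
    WeierstrassCurve.Affine.Point.some _ _ h₁ = WeierstrassCurve.Affine.Point.some _ _ h₂ := by
  subst hx; subst hy; rfl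

lemma Em_ns (m : ℤ) (x y : ℚ) (hy : y ≠ 0) (he : y^2 = x^3 - x + (m:ℚ)^6) :
    (Em m).toAffine.Nonsingular x y := by
  rw [WeierstrassCurve.Affine.nonsingular_iff]
  refine ⟨?_, Or.inr ?_⟩
  · rw [WeierstrassCurve.Affine.equation_iff]
    simp only [Em, WeierstrassCurve.toAffine]
    linear_combination he
  · simp only [Em, WeierstrassCurve.toAffine, WeierstrassCurve.Affine.negY]
    intro hcon
    apply hy
    linarith [hcon]

/-- For `m > 1` odd and divisible by `3`, with `P = (0, m³)`, `Q = (-1, m³)` and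
`R = (-m², m)` on `E_m : y² = x³ - x + m⁶`, none of `R`, `Q + R` and `P + Q + R` lies in
`2E_m(ℚ)`, i.e. each is nontrivial in `E_m(ℚ)/2E_m(ℚ)`. -/
theorem Em_R_QR_PQR_nontrivial_mod_two
    (m : ℤ) (hm : 1 < m) (hodd : Odd m) (h3 : (3 : ℤ) ∣ m)
    (hP : (Em m).toAffine.Nonsingular 0 ((m : ℚ) ^ 3))
    (hQ : (Em m).toAffine.Nonsingular (-1) ((m : ℚ) ^ 3))
    (hR : (Em m).toAffine.Nonsingular (-(m : ℚ) ^ 2) (m : ℚ)) :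
    WeierstrassCurve.Affine.Point.some _ _ hR ∉ (doublingHom (Em m).toAffine.Point).range ∧
      WeierstrassCurve.Affine.Point.some _ _ hQ + WeierstrassCurve.Affine.Point.some _ _ hR ∉
        (doublingHom (Em m).toAffine.Point).range ∧
      WeierstrassCurve.Affine.Point.some _ _ hP + WeierstrassCurve.Affine.Point.some _ _ hQ +
        WeierstrassCurve.Affine.Point.some _ _ hR ∉ (doublingHom (Em m).toAffine.Point).range := by
  have hm1 : (1:ℚ) < (m:ℚ) := by exact_mod_cast hm
  have hmp : (0:ℚ) < (m:ℚ) := by linarith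
  have hm3 := pow_pos hmp 3
  -- Q + R = (2m² + 1, -(3m³ + 2m))
  have hQR : (Em m).toAffine.Nonsingular (2*(m:ℚ)^2+1) (-(3*(m:ℚ)^3+2*(m:ℚ))) := by
    apply Em_ns
    · intro hcon; nlinarith
    · ring
  have hxQR : (-1 : ℚ) ≠ -(m:ℚ)^2 := by nlinarith
  have hdQR : (-1 - (-(m:ℚ)^2)) ≠ 0 := by intro hcon; apply hxQR; linarith
  have hsQR : (Em m).toAffine.slope (-1) (-(m:ℚ)^2) ((m:ℚ)^3) (m:ℚ) = (m:ℚ) := by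
    rw [slope_of_X_ne hxQR, div_eq_iff hdQR]; ring
  have eQR : WeierstrassCurve.Affine.Point.some _ _ hQ + WeierstrassCurve.Affine.Point.some _ _ hR
      = WeierstrassCurve.Affine.Point.some _ _ hQR := by
    rw [add_of_X_ne hxQR]
    apply Em_some_congr
    · rw [hsQR]
      simp only [Em, WeierstrassCurve.toAffine, WeierstrassCurve.Affine.addX]
      ring
    · rw [hsQR]
      simp only [Em, WeierstrassCurve.toAffine, WeierstrassCurve.Affine.addY,
        WeierstrassCurve.Affine.negAddY, WeierstrassCurve.Affine.addX,
        WeierstrassCurve.Affine.negY]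
      ring
  -- P + Q = (1, -m³)
  have hPQ : (Em m).toAffine.Nonsingular 1 (-(m:ℚ)^3) := by
    apply Em_ns
    · intro hcon; nlinarith
    · ring
  have hxPQ : (0 : ℚ) ≠ -1 := by norm_num
  have hsPQ : (Em m).toAffine.slope 0 (-1) ((m:ℚ)^3) ((m:ℚ)^3) = 0 := by
    rw [slope_of_X_ne hxPQ]; simp
  have ePQ : WeierstrassCurve.Affine.Point.some _ _ hP + WeierstrassCurve.Affine.Point.some _ _ hQ
      = WeierstrassCurve.Affine.Point.some _ _ hPQ := by
    rw [add_of_X_ne hxPQ]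
    apply Em_some_congr
    · rw [hsPQ]
      simp only [Em, WeierstrassCurve.toAffine, WeierstrassCurve.Affine.addX]
      ring
    · rw [hsPQ]
      simp only [Em, WeierstrassCurve.toAffine, WeierstrassCurve.Affine.addY,
        WeierstrassCurve.Affine.negAddY, WeierstrassCurve.Affine.addX,
        WeierstrassCurve.Affine.negY]
      ring
  -- (P + Q) + R = (2m² - 1, 3m³ - 2m)
  have hPQR : (Em m).toAffine.Nonsingular (2*(m:ℚ)^2-1) (3*(m:ℚ)^3-2*(m:ℚ)) := by
    apply Em_ns
    · intro hcon; nlinarith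
    · ring
  have hxPQR : (1 : ℚ) ≠ -(m:ℚ)^2 := by nlinarith
  have hdPQR : (1 - (-(m:ℚ)^2)) ≠ 0 := by intro hcon; apply hxPQR; linarith
  have hsPQR : (Em m).toAffine.slope 1 (-(m:ℚ)^2) (-(m:ℚ)^3) (m:ℚ) = -(m:ℚ) := by
    rw [slope_of_X_ne hxPQR, div_eq_iff hdPQR]; ring
  have ePQR : WeierstrassCurve.Affine.Point.some _ _ hPQ + WeierstrassCurve.Affine.Point.some _ _ hR
      = WeierstrassCurve.Affine.Point.some _ _ hPQR := by
    rw [add_of_X_ne hxPQR]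
    apply Em_some_congr
    · rw [hsPQR]
      simp only [Em, WeierstrassCurve.toAffine, WeierstrassCurve.Affine.addX]
      ring
    · rw [hsPQR]
      simp only [Em, WeierstrassCurve.toAffine, WeierstrassCurve.Affine.addY,
        WeierstrassCurve.Affine.negAddY, WeierstrassCurve.Affine.addX,
        WeierstrassCurve.Affine.negY]
      ring
  refine ⟨?_, ?_, ?_⟩
  · exact Em_descent m (-m^2) h3 (by push_cast; ring) hR
  · rw [eQR]
    exact Em_descent m (2*m^2+1) h3 (by push_cast; ring) hQR
  · rw [ePQ, ePQR]
    exact Em_descent m (2*m^2-1) h3 (by push_cast; ring) hPQR
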